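/- For every graph G on n ≥ 2 vertices, μ₂(G) + μ₂(Ḡ) < (√2/2)·n, where μ₂ denotes the second largest adjacency eigenvalue. -/

import Mathlib

open Matrix SimpleGraph

/-- The eigenvalues of the adjacency matrix of `G`, in descending order:
`graphEig G i` is the `(i+1)`-th largest eigenvalue. -/
noncomputable def graphEig {n : ℕ} (G : SimpleGraph (Fin n)) (i : Fin n) : ℝ :=
  letI := Classical.decRel G.Adj
  letI hH : (G.adjMatrix ℝ).IsHermitian := by rw [Matrix.IsHermitian, conjTranspose_eq_transpose_of_trivial]; exact G.isSymm_adjMatrix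
  hH.eigenvalues (Tuple.sort hH.eigenvalues i.rev)

section Spec
variable {n : ℕ} {A : Matrix (Fin n) (Fin n) ℝ} (hA : A.IsHermitian)

/-- The eigenvalues of a real symmetric matrix, in descending order. -/
noncomputable def sortedEig (i : Fin n) : ℝ :=
  hA.eigenvalues (Tuple.sort hA.eigenvalues i.rev)

lemma sortedEig_antitone : Antitone (sortedEig hA) := fun _ _ h =>
  Tuple.monotone_sort hA.eigenvalues (Fin.rev_le_rev.mpr h)

lemma le_sortedEig_zero (hpos : 0 < n) (j : Fin n) :
    hA.eigenvalues j ≤ sortedEig hA ⟨0, hpos⟩ := by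
  set σ := Tuple.sort hA.eigenvalues with hσ
  have h1 : hA.eigenvalues j = (hA.eigenvalues ∘ σ) (σ.symm j) := by simp
  have h2 : sortedEig hA ⟨0, hpos⟩ = (hA.eigenvalues ∘ σ) (Fin.rev ⟨0, hpos⟩) := rfl
  rw [h1, h2]
  exact Tuple.monotone_sort hA.eigenvalues (by
    have := (σ.symm j).isLt
    rw [Fin.le_def, Fin.val_rev]
    simp only [Fin.val_mk]
    omega)

lemma sortedEig_last_le (hpos : 0 < n) (j : Fin n) :
    sortedEig hA ⟨n - 1, by omega⟩ ≤ hA.eigenvalues j := by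
  set σ := Tuple.sort hA.eigenvalues with hσ
  have h1 : hA.eigenvalues j = (hA.eigenvalues ∘ σ) (σ.symm j) := by simp
  have h2 : sortedEig hA ⟨n - 1, by omega⟩ = (hA.eigenvalues ∘ σ) (Fin.rev ⟨n - 1, by omega⟩) := rfl
  rw [h1, h2]
  exact Tuple.monotone_sort hA.eigenvalues (by
    have := (σ.symm j).isLt
    rw [Fin.le_def, Fin.val_rev]
    simp only [Fin.val_mk]
    omega)

lemma dot_eig (i j : Fin n) :
    ⇑(hA.eigenvectorBasis i) ⬝ᵥ ⇑(hA.eigenvectorBasis j) = if i = j then (1:ℝ) else 0 := by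
  have := orthonormal_iff_ite.mp hA.eigenvectorBasis.orthonormal i j
  simpa [PiLp.inner_apply, RCLike.inner_apply, dotProduct, mul_comm] using this

lemma eigdot (x : Fin n → ℝ) (i : Fin n) :
    ⇑(hA.eigenvectorBasis i) ⬝ᵥ (A *ᵥ x) = hA.eigenvalues i * (⇑(hA.eigenvectorBasis i) ⬝ᵥ x) := by
  have hT : Aᵀ = A := by rw [← conjTranspose_eq_transpose_of_trivial]; exact hA
  rw [Matrix.dotProduct_mulVec, ← Matrix.mulVec_transpose, hT, hA.mulVec_eigenvectorBasis,
    smul_dotProduct]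
  simp

lemma parseval (x y : Fin n → ℝ) :
    ∑ i, (x ⬝ᵥ ⇑(hA.eigenvectorBasis i)) * (⇑(hA.eigenvectorBasis i) ⬝ᵥ y) = x ⬝ᵥ y := by
  have := hA.eigenvectorBasis.sum_inner_mul_inner
    ((WithLp.equiv 2 (Fin n → ℝ)).symm x) ((WithLp.equiv 2 (Fin n → ℝ)).symm y)
  simpa [PiLp.inner_apply, RCLike.inner_apply, dotProduct, mul_comm,
    WithLp.equiv_symm_apply, PiLp.toLp_apply] using this

lemma norm_expand (x : Fin n → ℝ) :
    x ⬝ᵥ x = ∑ i, (⇑(hA.eigenvectorBasis i) ⬝ᵥ x)^2 := by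
  rw [← parseval hA x x]
  exact Finset.sum_congr rfl fun i _ => by rw [dotProduct_comm]; ring

lemma quad_expand (x : Fin n → ℝ) :
    x ⬝ᵥ (A *ᵥ x) = ∑ i, hA.eigenvalues i * (⇑(hA.eigenvectorBasis i) ⬝ᵥ x)^2 := by
  rw [← parseval hA x (A *ᵥ x)]
  exact Finset.sum_congr rfl fun i _ => by rw [eigdot hA x i, dotProduct_comm]; ring

lemma quad_ge {c : ℝ} (hc : ∀ i, c ≤ hA.eigenvalues i) (x : Fin n → ℝ) :
    c * (x ⬝ᵥ x) ≤ x ⬝ᵥ (A *ᵥ x) := by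
  rw [quad_expand hA x, norm_expand hA x, Finset.mul_sum]
  exact Finset.sum_le_sum fun i _ => mul_le_mul_of_nonneg_right (hc i) (sq_nonneg _)

lemma quad_le {c : ℝ} (hc : ∀ i, hA.eigenvalues i ≤ c) (x : Fin n → ℝ) :
    x ⬝ᵥ (A *ᵥ x) ≤ c * (x ⬝ᵥ x) := by
  rw [quad_expand hA x, norm_expand hA x, Finset.mul_sum]
  exact Finset.sum_le_sum fun i _ => mul_le_mul_of_nonneg_right (hc i) (sq_nonneg _)

lemma sum_sq_eigen : ∑ i, hA.eigenvalues i ^ 2 = ∑ i, ∑ j, A i j ^ 2 := by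
  have key : ∀ k, (A *ᵥ Pi.single k 1) ⬝ᵥ (A *ᵥ Pi.single k 1)
      = ∑ i, hA.eigenvalues i ^ 2 * (⇑(hA.eigenvectorBasis i) ⬝ᵥ Pi.single k 1) ^ 2 := by
    intro k
    rw [norm_expand hA]
    exact Finset.sum_congr rfl fun i _ => by rw [eigdot hA _ i]; ring
  have h1 : ∑ k, (A *ᵥ Pi.single k 1) ⬝ᵥ (A *ᵥ Pi.single k 1)
      = ∑ i, hA.eigenvalues i ^ 2 := by
    rw [Finset.sum_congr rfl fun k _ => key k, Finset.sum_comm]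
    refine Finset.sum_congr rfl fun i _ => ?_
    rw [← Finset.mul_sum]
    have : ∑ k, (⇑(hA.eigenvectorBasis i) ⬝ᵥ Pi.single k 1) ^ 2
        = ⇑(hA.eigenvectorBasis i) ⬝ᵥ ⇑(hA.eigenvectorBasis i) := by
      rw [dotProduct]
      exact Finset.sum_congr rfl fun k _ => by rw [dotProduct_single]; ring
    rw [this, dot_eig hA, if_pos rfl, mul_one]
  rw [← h1, Finset.sum_comm]
  refine Finset.sum_congr rfl fun i _ => ?_
  rw [dotProduct]
  refine Finset.sum_congr rfl fun k _ => ?_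
  rw [Matrix.mulVec_single]
  simp [sq]

end Spec

theorem nord_step1 {n : ℕ} (hn : 2 ≤ n) {A B : Matrix (Fin n) (Fin n) ℝ}
    (hA : A.IsHermitian) (hB : B.IsHermitian)
    (hAB : A + B = Matrix.of (fun _ _ => (1:ℝ)) - 1) :
    sortedEig hB ⟨1, lt_of_lt_of_le one_lt_two hn⟩ ≤ -1 - sortedEig hA ⟨n-1, by omega⟩ := by
  have hpos : 0 < n := by omega
  set μn := sortedEig hA ⟨n-1, by omega⟩ with hμn
  set ν2 := sortedEig hB ⟨1, by omega⟩ with hν2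
  set σ := Tuple.sort hB.eigenvalues with hσdef
  set a := σ (Fin.rev ⟨0, hpos⟩) with hadef
  set b := σ (Fin.rev ⟨1, by omega⟩) with hbdef
  have hab : a ≠ b := by
    intro h
    have := Fin.rev_injective (σ.injective h)
    simp [Fin.ext_iff] at this
  have hfb : hB.eigenvalues b = ν2 := rfl
  have hfa : ν2 ≤ hB.eigenvalues a :=
    sortedEig_antitone hB (show (⟨0,hpos⟩:Fin n) ≤ ⟨1, by omega⟩ by simp [Fin.le_def])
  set w1 : Fin n → ℝ := ⇑(hB.eigenvectorBasis a) with hw1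
  set w2 : Fin n → ℝ := ⇑(hB.eigenvectorBasis b) with hw2
  have dot11 : w1 ⬝ᵥ w1 = 1 := by rw [hw1, dot_eig hB]; simp
  have dot12 : w1 ⬝ᵥ w2 = 0 := by rw [hw1, hw2, dot_eig hB]; simp [hab]
  have dot21 : w2 ⬝ᵥ w1 = 0 := by rw [hw1, hw2, dot_eig hB]; simp [Ne.symm hab]
  have dot22 : w2 ⬝ᵥ w2 = 1 := by rw [hw2, dot_eig hB]; simp
  set sa := ∑ k, w1 k with hsa
  set sb := ∑ k, w2 k with hsb
  obtain ⟨α, β, hnorm, hperp⟩ : ∃ α β : ℝ, α^2 + β^2 = 1 ∧ α * sa + β * sb = 0 := by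
    by_cases h : sa = 0 ∧ sb = 0
    · exact ⟨1, 0, by norm_num, by simp [h.1, h.2]⟩
    · have hr : (0:ℝ) < sa^2 + sb^2 := by
        rcases (not_and_or.mp h) with h' | h'
        · have : sa^2 > 0 := by positivity
          nlinarith [sq_nonneg sb]
        · have : sb^2 > 0 := by positivity
          nlinarith [sq_nonneg sa]
      have hs := Real.sq_sqrt hr.le
      have hs' : Real.sqrt (sa^2+sb^2) ≠ 0 := by positivity
      refine ⟨sb / Real.sqrt (sa^2+sb^2), -sa / Real.sqrt (sa^2+sb^2), ?_, by field_simp; ring⟩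
      field_simp
      linarith [hs]
  set z : Fin n → ℝ := α • w1 + β • w2 with hz
  have hzz : z ⬝ᵥ z = 1 := by
    rw [hz]
    simp only [add_dotProduct, smul_dotProduct, dotProduct_add,
      dotProduct_smul, smul_eq_mul, dot11, dot12, dot21, dot22]
    ring_nf
    linear_combination hnorm
  have hBz : B *ᵥ z = (α * hB.eigenvalues a) • w1 + (β * hB.eigenvalues b) • w2 := by
    rw [hz, Matrix.mulVec_add, Matrix.mulVec_smul, Matrix.mulVec_smul, hw1, hw2,
      hB.mulVec_eigenvectorBasis, hB.mulVec_eigenvectorBasis, smul_smul, smul_smul]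
  have hzBz : z ⬝ᵥ (B *ᵥ z) = hB.eigenvalues a * α^2 + hB.eigenvalues b * β^2 := by
    rw [hBz, hz]
    simp only [add_dotProduct, smul_dotProduct, dotProduct_add,
      dotProduct_smul, smul_eq_mul, dot11, dot12, dot21, dot22]
    ring
  have h1 : ν2 ≤ z ⬝ᵥ (B *ᵥ z) := by
    rw [hzBz, hfb]
    have e : ν2 * α^2 + ν2 * β^2 = ν2 := by linear_combination ν2 * hnorm
    linarith [mul_le_mul_of_nonneg_right hfa (sq_nonneg α), e]
  have hsz : ∑ k, z k = 0 := by
    rw [hz]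
    simp only [Pi.add_apply, Pi.smul_apply, smul_eq_mul, Finset.sum_add_distrib, ← Finset.mul_sum]
    rw [← hsa, ← hsb]
    exact hperp
  have hJz : z ⬝ᵥ ((Matrix.of fun _ _ => (1:ℝ)) *ᵥ z) = (∑ k, z k) * (∑ k, z k) := by
    have : (Matrix.of fun _ _ => (1:ℝ) : Matrix (Fin n) (Fin n) ℝ) *ᵥ z = fun _ => ∑ k, z k := by
      funext i; simp [Matrix.mulVec, dotProduct]
    rw [this, dotProduct, ← Finset.sum_mul]
  have hBeq : B = Matrix.of (fun _ _ => (1:ℝ)) - 1 - A := by rw [← hAB]; abel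
  have hsplit : z ⬝ᵥ (B *ᵥ z) = (∑ k, z k) * (∑ k, z k) - z ⬝ᵥ z - z ⬝ᵥ (A *ᵥ z) := by
    conv_lhs => rw [hBeq]
    rw [Matrix.sub_mulVec, Matrix.sub_mulVec, dotProduct_sub, dotProduct_sub,
      Matrix.one_mulVec, hJz]
  have hAz : μn * (z ⬝ᵥ z) ≤ z ⬝ᵥ (A *ᵥ z) :=
    quad_ge hA (fun j => sortedEig_last_le hA hpos j) z
  rw [hzz, mul_one] at hAz
  rw [hsplit, hsz, hzz] at h1
  linarith

theorem nord_step2 {n : ℕ} (hn : 3 ≤ n) {A : Matrix (Fin n) (Fin n) ℝ}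
    (hA : A.IsHermitian) (hA01 : ∀ i j, A i j = 0 ∨ A i j = 1) :
    sortedEig hA ⟨1, by omega⟩ ^ 2 + sortedEig hA ⟨n-1, by omega⟩ ^ 2 ≤ (n:ℝ)^2/4 := by
  have hpos : 0 < n := by omega
  set μ1 := sortedEig hA ⟨0, hpos⟩ with hμ1
  set μ2 := sortedEig hA ⟨1, by omega⟩ with hμ2
  set μn := sortedEig hA ⟨n-1, by omega⟩ with hμn
  set T := ∑ i, ∑ j, A i j with hT
  have hTnn : 0 ≤ T :=
    Finset.sum_nonneg fun i _ => Finset.sum_nonneg fun j _ => by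
      rcases hA01 i j with h | h <;> rw [h] <;> norm_num
  have hT2 : ∑ i, hA.eigenvalues i ^ 2 = T := by
    rw [sum_sq_eigen hA]
    exact Finset.sum_congr rfl fun i _ => Finset.sum_congr rfl fun j _ => by
      rcases hA01 i j with h | h <;> rw [h] <;> norm_num
  have hone : (fun _ => (1:ℝ)) ⬝ᵥ (A *ᵥ fun _ => (1:ℝ)) = T := by
    simp [dotProduct, Matrix.mulVec, hT]
  have honen : (fun _ => (1:ℝ)) ⬝ᵥ (fun _ : Fin n => (1:ℝ)) = (n:ℝ) := by
    simp [dotProduct]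
  have hμ1T : T ≤ μ1 * n := by
    have := quad_le hA (fun j => le_sortedEig_zero hA hpos j) (fun _ => 1)
    rwa [hone, honen] at this
  set σA := Tuple.sort hA.eigenvalues with hσA
  set a := σA (Fin.rev ⟨0, hpos⟩) with hadef
  set b := σA (Fin.rev ⟨1, by omega⟩) with hbdef
  set c := σA (Fin.rev ⟨n-1, by omega⟩) with hcdef
  have inj : ∀ i j : Fin n, σA (Fin.rev i) = σA (Fin.rev j) → i = j := fun i j h =>
    Fin.rev_injective (σA.injective h)
  have hab : a ≠ b := fun h => by have := inj _ _ h; simp [Fin.ext_iff] at this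
  have hac : a ≠ c := fun h => by have := inj _ _ h; simp [Fin.ext_iff] at this; omega
  have hbc : b ≠ c := fun h => by have := inj _ _ h; simp [Fin.ext_iff] at this; omega
  have ea : hA.eigenvalues a = μ1 := rfl
  have eb : hA.eigenvalues b = μ2 := rfl
  have ec : hA.eigenvalues c = μn := rfl
  have hsum3 : μ1^2 + μ2^2 + μn^2 ≤ ∑ i, hA.eigenvalues i ^ 2 := by
    have hss := Finset.sum_le_sum_of_subset_of_nonneg
      (Finset.subset_univ ({a, b, c} : Finset (Fin n)))
      (fun i _ _ => sq_nonneg (hA.eigenvalues i))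
    rw [Finset.sum_insert (by simp [hab, hac]), Finset.sum_insert (by simp [hbc]),
      Finset.sum_singleton, ea, eb, ec] at hss
    linarith [hss]
  have hncast : (0:ℝ) < n := by exact_mod_cast hpos
  have hμ1nn : 0 ≤ μ1 := by nlinarith
  have k1 : T*T ≤ (μ1*n)*(μ1*n) := mul_self_le_mul_self hTnn hμ1T
  have k2 : (μ2^2 + μn^2) * (n:ℝ)^2 ≤ (T - μ1^2) * (n:ℝ)^2 := by
    have hb1 : μ2^2 + μn^2 ≤ T - μ1^2 := by linarith [hsum3, hT2]
    exact mul_le_mul_of_nonneg_right hb1 (by positivity)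
  nlinarith [k1, k2, sq_nonneg (2*T - (n:ℝ)^2), hncast, mul_pos hncast hncast]

theorem main_bound {n : ℕ} (hn : 2 ≤ n) {A B : Matrix (Fin n) (Fin n) ℝ}
    (hA : A.IsHermitian) (hB : B.IsHermitian)
    (hAB : A + B = Matrix.of (fun _ _ => (1:ℝ)) - 1)
    (hA01 : ∀ i j, A i j = 0 ∨ A i j = 1) :
    sortedEig hA ⟨1, lt_of_lt_of_le one_lt_two hn⟩ + sortedEig hB ⟨1, lt_of_lt_of_le one_lt_two hn⟩ < Real.sqrt 2 / 2 * n := by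
  have s1 := nord_step1 hn hA hB hAB
  by_cases hn3 : 3 ≤ n
  · have s2 := nord_step2 hn3 hA hA01
    set μ2 := sortedEig hA ⟨1, by omega⟩ with hμ2
    set μn := sortedEig hA ⟨n-1, by omega⟩ with hμn
    set ν2 := sortedEig hB ⟨1, by omega⟩ with hν2
    have hd : μn ≤ μ2 :=
      sortedEig_antitone hA (show (⟨1, by omega⟩:Fin n) ≤ ⟨n-1, by omega⟩ by
        rw [Fin.le_def]; simp; omega)
    have hc : (0:ℝ) ≤ Real.sqrt 2/2 * n := by positivity
    have hcsq : (Real.sqrt 2/2*(n:ℝ))^2 = (n:ℝ)^2/2 := by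
      rw [mul_pow, div_pow, Real.sq_sqrt (by norm_num : (0:ℝ) ≤ 2)]; ring
    have hstep : μ2 - μn ≤ Real.sqrt 2/2 * n := by
      nlinarith [s2, hd, hc, hcsq, sq_nonneg (μ2 + μn)]
    linarith
  · have hn2 : n = 2 := by omega
    subst hn2
    have s1' : sortedEig hB ⟨1, by omega⟩ ≤ -1 - sortedEig hA ⟨1, by omega⟩ := s1
    have hs : (0:ℝ) ≤ Real.sqrt 2 := Real.sqrt_nonneg 2
    have h2 : Real.sqrt 2 / 2 * ((2:ℕ):ℝ) = Real.sqrt 2 := by norm_num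
    rw [h2]
    linarith [s1', hs]

theorem stmt9 (n : ℕ) (hn : 2 ≤ n) (G : SimpleGraph (Fin n)) :
    graphEig G ⟨1, by omega⟩ + graphEig Gᶜ ⟨1, by omega⟩ < Real.sqrt 2 / 2 * n := by
  letI instG : DecidableRel G.Adj := Classical.decRel G.Adj
  letI instGc : DecidableRel Gᶜ.Adj := Classical.decRel Gᶜ.Adj
  have hA : (G.adjMatrix ℝ).IsHermitian := by
    rw [Matrix.IsHermitian, conjTranspose_eq_transpose_of_trivial]; exact G.isSymm_adjMatrix
  have hB : (Gᶜ.adjMatrix ℝ).IsHermitian := by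
    rw [Matrix.IsHermitian, conjTranspose_eq_transpose_of_trivial]; exact Gᶜ.isSymm_adjMatrix
  have hAB : G.adjMatrix ℝ + Gᶜ.adjMatrix ℝ = Matrix.of (fun _ _ => (1:ℝ)) - 1 := by
    ext i j
    by_cases h : i = j
    · subst h; simp [Matrix.one_apply]
    · simp only [Matrix.add_apply, SimpleGraph.adjMatrix_apply, SimpleGraph.compl_adj,
        Matrix.sub_apply, Matrix.of_apply, Matrix.one_apply_ne h]
      by_cases hadj : G.Adj i j <;> simp [hadj, h]
  have hA01 : ∀ i j, G.adjMatrix ℝ i j = 0 ∨ G.adjMatrix ℝ i j = 1 := fun i j => by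
    by_cases h : G.Adj i j
    · right; simp [h]
    · left; simp [h]
  exact main_bound hn hA hB hAB hA01
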